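/- arXiv:1007.4285 — 5 statements merged into one kernel-verified Lean document; each statement's English description precedes it below -/
import Mathlib

section
/- Let G be a topological group, and E and H subgroups of G with E ⊆ H. If E is an essential subgroup of H and H is an essential subgroup of G, then E is an essential subgroup of G. -/
/-- The quasi-component of the identity (zero) element of a topological (additive) group:
the intersection of all clopen sets containing the identity. -/
def quasiComponent (G : Type*) [Zero G] [TopologicalSpace G] : Set G :=
  ⋂₀ {U : Set G | IsClopen U ∧ (0 : G) ∈ U}

/-- A subgroup `E` of a topological group `G` is *essential* (`E ≤_e G`) if `E ∩ N` is
non-trivial for every non-trivial closed normal subgroup `N` of `G`. -/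
def IsEssential {G : Type*} [AddGroup G] [TopologicalSpace G] (E : AddSubgroup G) : Prop :=
  ∀ N : AddSubgroup G, N.Normal → IsClosed (N : Set G) → N ≠ ⊥ → E ⊓ N ≠ ⊥

/-- A (Hausdorff) topological group is *minimal* if there is no strictly coarser Hausdorff
group topology on it. -/
def IsMinimalAddGroup (G : Type*) [AddGroup G] [tG : TopologicalSpace G] : Prop :=
  ∀ t : TopologicalSpace G, tG ≤ t → @IsTopologicalAddGroup G t _ → @T2Space G t → t = tG

/-- A space is *pseudocompact* if every continuous real-valued function on it is bounded. -/
def IsPseudocompact (X : Type*) [TopologicalSpace X] : Prop :=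
  ∀ f : X → ℝ, Continuous f → ∃ B : ℝ, ∀ x : X, |f x| ≤ B

/-- **Lemma 2.1(a).** If `E ⊆ H` are subgroups of a topological group `G`, `E` is essential in
`H` and `H` is essential in `G`, then `E` is essential in `G`. -/
theorem isEssential_trans {G : Type*} [AddGroup G] [TopologicalSpace G] [IsTopologicalAddGroup G]
    (E H : AddSubgroup G) (hEH : E ≤ H)
    (h₁ : IsEssential (E.addSubgroupOf H)) (h₂ : IsEssential H) :
    IsEssential E := by
  intro N hNnorm hNclosed hNne hbot
  -- N ∩ H as a subgroup of H
  have hHN : H ⊓ N ≠ ⊥ := h₂ N hNnorm hNclosed hNne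
  have key := h₁ (N.addSubgroupOf H) (hNnorm.addSubgroupOf H)
    (by
      have : (N.addSubgroupOf H : Set H) = (H.subtype) ⁻¹' N := rfl
      rw [this]
      exact hNclosed.preimage continuous_subtype_val)
    (by
      intro hb
      apply hHN
      rw [AddSubgroup.eq_bot_iff_forall] at hb ⊢
      intro x hx
      have := hb ⟨x, hx.1⟩ hx.2
      simpa using this)
  apply key
  rw [AddSubgroup.eq_bot_iff_forall] at hbot ⊢
  intro x hx
  have : (x : G) = 0 := hbot x ⟨hx.1, hx.2⟩
  exact Subtype.ext this
end

section
/- Let G be a topological group and E an essential subgroup of G. If L is an elementwise compact topological group, then L × E is an essential subgroup of L × G. -/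
/-- A topological group is *elementwise compact* if each of its elements is contained in a
compact subgroup. -/
def ElementwiseCompact (L : Type*) [AddGroup L] [TopologicalSpace L] : Prop :=
  ∀ x : L, ∃ K : AddSubgroup L, IsCompact (K : Set L) ∧ x ∈ K

/-- **Lemma 2.4.** If `E` is an essential subgroup of a topological group `G` and `L` is an
elementwise compact topological group, then `L × E` is essential in `L × G`. -/
theorem prod_isEssential_of_elementwiseCompact {L G : Type*}
    [AddGroup L] [TopologicalSpace L] [IsTopologicalAddGroup L]
    [AddGroup G] [TopologicalSpace G] [IsTopologicalAddGroup G]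
    (E : AddSubgroup G) (hE : IsEssential E) (hL : ElementwiseCompact L) :
    IsEssential ((⊤ : AddSubgroup L).prod E) := by
  intro N hNorm hNcl hNbot
  obtain ⟨⟨⟨l, g⟩, hxN⟩, hx0⟩ := AddSubgroup.ne_bot_iff_exists_ne_zero.mp hNbot
  have hx0' : (l, g) ≠ (0 : L × G) := by
    simpa [Subtype.ext_iff] using hx0
  by_cases hg : g = 0
  · -- then `(l, 0)` is a nonzero element of `(⊤.prod E) ⊓ N`
    intro hbot
    have hmem : ((l, g) : L × G) ∈ (⊤ : AddSubgroup L).prod E ⊓ N :=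
      ⟨⟨trivial, hg ▸ E.zero_mem⟩, hxN⟩
    rw [hbot] at hmem
    exact hx0' (by simpa using hmem)
  · obtain ⟨K, hKc, hlK⟩ := hL l
    set P : AddSubgroup G :=
      AddSubgroup.map (AddMonoidHom.snd L G) (N ⊓ K.prod ⊤) with hPdef
    have hPmem : ∀ y : G, y ∈ P ↔ ∃ k ∈ K, ((k, y) : L × G) ∈ N := by
      intro y
      constructor
      · rintro ⟨⟨a, b⟩, ⟨haN, haK, -⟩, rfl⟩
        exact ⟨a, haK, haN⟩
      · rintro ⟨k, hk, hkN⟩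
        exact ⟨(k, y), ⟨hkN, hk, trivial⟩, rfl⟩
    have hPnormal : P.Normal := by
      constructor
      intro n hn x
      rw [hPmem] at hn ⊢
      obtain ⟨k, hk, hkN⟩ := hn
      refine ⟨k, hk, ?_⟩
      have := hNorm.conj_mem _ hkN ((0 : L), x)
      simpa using this
    have hPclosed : IsClosed (P : Set G) := by
      haveI : CompactSpace (K : Set L) := isCompact_iff_compactSpace.mp hKc
      have hφ : Continuous (fun p : (↥(K : Set L)) × G => ((p.1 : L), p.2)) :=
        (continuous_subtype_val.comp continuous_fst).prodMk continuous_snd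
      have hC : IsClosed
          ((fun p : (↥(K : Set L)) × G => ((p.1 : L), p.2)) ⁻¹' (N : Set (L × G))) :=
        hNcl.preimage hφ
      have himg : (P : Set G) = Prod.snd ''
          ((fun p : (↥(K : Set L)) × G => ((p.1 : L), p.2)) ⁻¹' (N : Set (L × G))) := by
        ext y
        simp only [Set.mem_image, Set.mem_preimage, SetLike.mem_coe]
        constructor
        · intro hy
          obtain ⟨k, hk, hkN⟩ := (hPmem y).mp hy
          exact ⟨(⟨k, hk⟩, y), hkN, rfl⟩
        · rintro ⟨⟨k, y'⟩, hkN, rfl⟩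
          exact (hPmem _).mpr ⟨(k : L), k.2, hkN⟩
      rw [himg]
      exact isClosedMap_snd_of_compactSpace _ hC
    have hPbot : P ≠ ⊥ := by
      intro h
      have hgP : g ∈ P := (hPmem g).mpr ⟨l, hlK, hxN⟩
      rw [h] at hgP
      exact hg (by simpa using hgP)
    obtain ⟨⟨e, heE, heP⟩, he0⟩ :=
      AddSubgroup.ne_bot_iff_exists_ne_zero.mp (hE P hPnormal hPclosed hPbot)
    have he0' : e ≠ 0 := by simpa [Subtype.ext_iff] using he0
    obtain ⟨k, hk, hkN⟩ := (hPmem e).mp heP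
    intro hbot
    have hmem : ((k, e) : L × G) ∈ (⊤ : AddSubgroup L).prod E ⊓ N :=
      ⟨⟨trivial, heE⟩, hkN⟩
    rw [hbot] at hmem
    have : ((k, e) : L × G) = 0 := by simpa using hmem
    exact he0' (congrArg Prod.snd this)
end

section
/- Let M be a minimal abelian Hausdorff topological group, G a topological group, and E an essential subgroup of G. If M × E is minimal, then M × E is an essential subgroup of M̃ × E, where M̃ is the completion of M. -/
open Filter Topology in
/-- A dense image of a minimal group is essential, provided the closure of `{0}` is contained
in the image. -/
theorem isEssential_range_of_minimal {P K : Type*} [AddGroup P] [tP : TopologicalSpace P]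
    [IsTopologicalAddGroup P] [AddGroup K] [TopologicalSpace K] [IsTopologicalAddGroup K]
    (j : P →+ K) (hjc : Continuous j) (hjinj : Function.Injective j)
    (hjd : Dense (Set.range j)) (hmin : IsMinimalAddGroup P)
    (hcl0 : closure ({0} : Set K) ⊆ Set.range j) :
    IsEssential j.range := by
  intro N hNnorm hNcl hNne hbot
  haveI := hNnorm
  haveI : IsClosed (N : Set K) := hNcl
  -- the quotient map and the composite
  set π : K →+ K ⧸ N := QuotientAddGroup.mk' N with hπ
  have hπc : Continuous π := QuotientAddGroup.continuous_mk
  set q : P →+ K ⧸ N := π.comp j with hq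
  have hqc : Continuous q := hπc.comp hjc
  have hmem_bot : ∀ x : K, x ∈ j.range → x ∈ N → x = 0 := by
    intro x hx hxN
    have : x ∈ j.range ⊓ N := ⟨hx, hxN⟩
    rw [hbot] at this
    exact AddSubgroup.mem_bot.mp this
  have hqinj : Function.Injective q := by
    intro a b hab
    have h1 : π (j a - j b) = 0 := by
      rw [map_sub]
      have : π (j a) = π (j b) := hab
      rw [this, sub_self]
    have h2 : j a - j b ∈ N := (QuotientAddGroup.eq_zero_iff _).mp h1
    have h3 : j a - j b ∈ j.range := by
      rw [← map_sub]; exact ⟨a - b, rfl⟩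
    have h4 : j (a - b) = 0 := by rw [map_sub]; exact hmem_bot _ h3 h2
    have h5 : a - b = 0 := hjinj (by rw [h4, map_zero])
    exact sub_eq_zero.mp h5
  -- the induced topology
  have hle : tP ≤ TopologicalSpace.induced (⇑q) inferInstance :=
    continuous_iff_le_induced.mp hqc
  have heq : TopologicalSpace.induced (⇑q) (inferInstance : TopologicalSpace (K ⧸ N)) = tP := by
    set t' : TopologicalSpace P := TopologicalSpace.induced (⇑q) inferInstance with ht'
    have hg : @IsTopologicalAddGroup P t' _ := topologicalAddGroup_induced q
    have ht2 : @T2Space P t' := by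
      letI := t'
      have hemb : Topology.IsEmbedding q := ⟨⟨rfl⟩, hqinj⟩
      exact hemb.t2Space
    exact hmin t' hle hg ht2
  -- pick a nonzero element of N
  obtain ⟨⟨n, hnN⟩, hn0⟩ := AddSubgroup.ne_bot_iff_exists_ne_zero.mp hNne
  have hn0' : n ≠ 0 := by
    intro h; exact hn0 (Subtype.ext h)
  -- the filter argument
  have hnc : n ∈ closure (Set.range j) := hjd n
  set F : Filter K := 𝓝 n ⊓ 𝓟 (Set.range ⇑j) with hF
  haveI hFne : F.NeBot := mem_closure_iff_clusterPt.mp hnc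
  have hrangeF : Set.range ⇑j ∈ F := mem_inf_of_right (mem_principal_self _)
  haveI : (F.comap j).NeBot := Filter.NeBot.comap_of_range_mem hFne hrangeF
  have hmapj : Filter.map j (F.comap j) = F := by
    rw [Filter.map_comap, inf_eq_left.mpr (inf_le_right : F ≤ 𝓟 (Set.range ⇑j))]
  have hπn : π n = 0 := (QuotientAddGroup.eq_zero_iff _).mpr hnN
  have hmapq : Filter.map q (F.comap j) ≤ 𝓝 (0 : K ⧸ N) := by
    have h1 : Filter.map π F ≤ 𝓝 (0 : K ⧸ N) := by
      calc Filter.map π F ≤ Filter.map π (𝓝 n) := Filter.map_mono inf_le_left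
        _ ≤ 𝓝 (π n) := (hπc.tendsto n)
        _ = 𝓝 0 := by rw [hπn]
    have h2 : (⇑q) = (⇑π) ∘ (⇑j) := rfl
    rw [h2, ← Filter.map_map, hmapj]
    exact h1
  have hcom : F.comap j ≤ @nhds P (TopologicalSpace.induced (⇑q) inferInstance) 0 := by
    have h3 : @nhds P (TopologicalSpace.induced (⇑q) inferInstance) 0 =
        Filter.comap q (𝓝 (q 0)) := nhds_induced (⇑q) (0 : P)
    rw [h3, map_zero]
    exact Filter.map_le_iff_le_comap.mp hmapq
  rw [heq] at hcom
  have hF0 : F ≤ 𝓝 (0 : K) := by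
    rw [← hmapj]
    calc Filter.map j (F.comap j) ≤ Filter.map j (@nhds P tP 0) := Filter.map_mono hcom
      _ ≤ 𝓝 (j 0) := (hjc.tendsto 0)
      _ = 𝓝 0 := by rw [map_zero]
  have hins : Inseparable n (0 : K) := by
    by_contra hsep
    have hd : Disjoint (𝓝 n) (𝓝 (0 : K)) :=
      disjoint_nhds_nhds_iff_not_inseparable.mpr hsep
    have : F ≤ ⊥ := le_trans (le_inf inf_le_left hF0) (le_of_eq hd.eq_bot)
    exact hFne.ne (le_bot_iff.mp this)
  have hncl0 : n ∈ closure ({0} : Set K) := hins.symm.specializes.mem_closure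
  exact hn0' (hmem_bot n (hcl0 hncl0) hnN)

/-- **Lemma 2.7(a).** Let `M` be a minimal abelian Hausdorff group, `G` a topological group and
`E` an essential subgroup of `G`. If `M × E` is minimal, then `M × E` is an essential subgroup
of `M̃ × E`, where `M̃` is the completion of `M`. -/
theorem prodMin_essential_in_completion_prod_self {M : Type*} [AddCommGroup M]
    [TopologicalSpace M] [IsTopologicalAddGroup M] [T2Space M]
    {G : Type*} [AddGroup G] [TopologicalSpace G] [IsTopologicalAddGroup G]
    (hM : IsMinimalAddGroup M) (E : AddSubgroup G) (hE : IsEssential E)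
    (hME : IsMinimalAddGroup (M × ↥E)) :
    letI : UniformSpace M := IsTopologicalAddGroup.rightUniformSpace M
    haveI : IsUniformAddGroup M := isUniformAddGroup_of_addCommGroup
    IsEssential ((UniformSpace.Completion.toCompl (α := M)).range.prod
      (⊤ : AddSubgroup ↥E)) := by
  letI : UniformSpace M := IsTopologicalAddGroup.rightUniformSpace M
  haveI : IsUniformAddGroup M := isUniformAddGroup_of_addCommGroup
  set c : M →+ UniformSpace.Completion M := UniformSpace.Completion.toCompl (α := M) with hc
  set j : M × ↥E →+ UniformSpace.Completion M × ↥E := c.prodMap (AddMonoidHom.id ↥E) with hj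
  have hjfun : (⇑j) = Prod.map (⇑c) id := rfl
  have hjc : Continuous j := by
    rw [hjfun]
    exact (UniformSpace.Completion.continuous_toCompl.comp continuous_fst).prodMk
      continuous_snd
  have hcinj : Function.Injective (⇑c) := UniformSpace.Completion.coe_injective M
  have hjinj : Function.Injective (⇑j) := by
    rw [hjfun]
    exact Function.Injective.prodMap hcinj Function.injective_id
  have hjd : Dense (Set.range ⇑j) := by
    rw [hjfun, Set.range_prodMap, Set.range_id]
    exact (UniformSpace.Completion.isDenseInducing_toCompl M).dense.prod dense_univ
  have hcl0 : closure ({0} : Set (UniformSpace.Completion M × ↥E)) ⊆ Set.range ⇑j := by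
    have hclosed : IsClosed (({0} : Set (UniformSpace.Completion M)) ×ˢ
        (Set.univ : Set ↥E)) := isClosed_singleton.prod isClosed_univ
    have hsub : ({0} : Set (UniformSpace.Completion M × ↥E)) ⊆
        ({0} : Set (UniformSpace.Completion M)) ×ˢ (Set.univ : Set ↥E) := by
      rintro x hx
      rw [Set.mem_singleton_iff] at hx
      subst hx
      exact ⟨rfl, trivial⟩
    refine (closure_minimal hsub hclosed).trans ?_
    rintro ⟨x1, x2⟩ ⟨hx1, -⟩
    rw [Set.mem_singleton_iff] at hx1
    subst hx1
    exact ⟨(0, x2), by rw [hjfun]; simp [Prod.map]⟩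
  have hrange : (UniformSpace.Completion.toCompl (α := M)).range.prod
      (⊤ : AddSubgroup ↥E) = j.range := by
    ext ⟨x1, x2⟩
    constructor
    · rintro ⟨⟨m, hm⟩, -⟩
      exact ⟨(m, x2), by rw [hjfun]; simp [Prod.map]; exact hm⟩
    · rintro ⟨⟨m, e⟩, hme⟩
      rw [hjfun] at hme
      refine ⟨⟨m, ?_⟩, trivial⟩
      exact congrArg Prod.fst hme
  show IsEssential _
  rw [hrange]
  exact isEssential_range_of_minimal j hjc hjinj hjd hME hcl0
end

section
/- Let M be a minimal abelian Hausdorff topological group, G a topological group, and E an essential subgroup of G. If M × E is minimal, then M × E is an essential subgroup of M × G. -/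
/-- **Lemma 2.7(c).** Let `M` be a minimal abelian Hausdorff group, `G` a topological group and
`E` an essential subgroup of `G`. If `M × E` is minimal, then `M × E` is an essential subgroup
of `M × G`. -/
theorem prodMin_essential_in_prod {M : Type*} [AddCommGroup M]
    [TopologicalSpace M] [IsTopologicalAddGroup M] [T2Space M]
    {G : Type*} [AddGroup G] [TopologicalSpace G] [IsTopologicalAddGroup G]
    (hM : IsMinimalAddGroup M) (E : AddSubgroup G) (hE : IsEssential E)
    (hME : IsMinimalAddGroup (M × ↥E)) :
    IsEssential ((⊤ : AddSubgroup M).prod E) := by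
  intro N hNorm hNcl hNbot h0
  haveI := hNorm
  haveI : IsClosed (N : Set (M × G)) := hNcl
  -- the projection of `N` to `G`
  set K : AddSubgroup G := N.map (AddMonoidHom.snd M G) with hKdef
  haveI hKnormal : K.Normal := hNorm.map _ (fun g => ⟨(0, g), rfl⟩)
  have hKbot : K ≠ ⊥ := by
    intro hKb
    apply hNbot
    rw [eq_bot_iff]
    intro x hx
    have hx2 : x.2 ∈ K := ⟨x, hx, rfl⟩
    rw [hKb, AddSubgroup.mem_bot] at hx2
    have hxE : x ∈ (⊤ : AddSubgroup M).prod E :=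
      ⟨trivial, by rw [hx2]; exact E.zero_mem⟩
    have hmem : x ∈ ((⊤ : AddSubgroup M).prod E ⊓ N) := ⟨hxE, hx⟩
    rw [h0] at hmem
    exact hmem
  -- an essential element
  haveI : K.topologicalClosure.Normal := K.is_normal_topologicalClosure
  obtain ⟨e, heE, heK, hene⟩ : ∃ e : G, e ∈ E ∧ e ∈ K.topologicalClosure ∧ e ≠ 0 := by
    have hne : E ⊓ K.topologicalClosure ≠ ⊥ :=
      hE K.topologicalClosure inferInstance K.isClosed_topologicalClosure
        (fun h => hKbot (le_bot_iff.mp (h ▸ K.le_topologicalClosure)))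
    rw [AddSubgroup.ne_bot_iff_exists_ne_zero] at hne
    obtain ⟨⟨a, haE, haK⟩, ha⟩ := hne
    refine ⟨a, haE, haK, fun h => ha ?_⟩
    ext
    exact h
  -- the quotient map restricted to `M × E`
  let q : (M × G) →+ (M × G) ⧸ N := QuotientAddGroup.mk' N
  let φ : (M × ↥E) →+ (M × G) := (AddMonoidHom.id M).prodMap E.subtype
  let ψ : (M × ↥E) →+ (M × G) ⧸ N := q.comp φ
  have hψinj : Function.Injective ψ := by
    rw [injective_iff_map_eq_zero]
    rintro ⟨m, e'⟩ hme
    have hmem : ((m, (e' : G)) : M × G) ∈ N := (QuotientAddGroup.eq_zero_iff _).mp hme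
    have h1 : ((m, (e' : G)) : M × G) ∈ (⊤ : AddSubgroup M).prod E ⊓ N :=
      ⟨⟨trivial, e'.2⟩, hmem⟩
    rw [h0, AddSubgroup.mem_bot] at h1
    have hm : m = 0 := congrArg Prod.fst h1
    have he' : (e' : G) = 0 := congrArg Prod.snd h1
    exact Prod.ext hm (by ext; exact he')
  have hqcont : Continuous (q : (M × G) → (M × G) ⧸ N) := continuous_quot_mk
  have hφcont : Continuous (φ : (M × ↥E) → (M × G)) :=
    continuous_id.prodMap continuous_subtype_val
  have hψcont : Continuous (ψ : (M × ↥E) → (M × G) ⧸ N) := hqcont.comp hφcont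
  -- the induced topology is a coarser Hausdorff group topology, hence equals the original
  have hσeq : (TopologicalSpace.induced (⇑ψ) inferInstance : TopologicalSpace (M × ↥E))
      = instTopologicalSpaceProd := by
    refine hME _ (continuous_iff_le_induced.mp hψcont) (topologicalAddGroup_induced ψ) ?_
    letI : TopologicalSpace (M × ↥E) := TopologicalSpace.induced (⇑ψ) inferInstance
    exact Topology.IsEmbedding.t2Space ⟨⟨rfl⟩, hψinj⟩
  have hind : Topology.IsInducing (⇑ψ) := ⟨hσeq.symm⟩
  haveI hT2 : T2Space (M × ↥E) :=
    Topology.IsEmbedding.t2Space (⟨hind, hψinj⟩ : Topology.IsEmbedding (⇑ψ))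
  haveI : T2Space (↥E) := (isEmbedding_prodMkRight (0 : M)).t2Space
  -- the closed subset `M × {0}` of `M × E`
  set C : Set (M × ↥E) := Set.univ ×ˢ ({0} : Set ↥E) with hCdef
  have hCclosed : IsClosed C := isClosed_univ.prod isClosed_singleton
  -- the key point
  set p : M × ↥E := ((0 : M), (⟨e, heE⟩ : ↥E)) with hpdef
  -- `ψ p` lies in the closure of `ψ '' C`
  have hq_eq : (q : (M × G) → _) '' (Set.univ ×ˢ (K : Set G)) ⊆ ψ '' C := by
    rintro _ ⟨⟨m, g⟩, ⟨-, hg⟩, rfl⟩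
    obtain ⟨n, hnN, hn2⟩ := hg
    refine ⟨(m - n.1, 0), ⟨trivial, rfl⟩, ?_⟩
    show q (m - n.1, (0 : G)) = q (m, g)
    rw [← sub_eq_zero, ← map_sub, QuotientAddGroup.mk'_apply, QuotientAddGroup.eq_zero_iff]
    have : ((m - n.1, (0:G)) : M × G) - (m, g) = -(n.1, g) := by
      ext <;> simp
    have hn2' : n.2 = g := hn2
    rw [this, ← hn2']
    exact N.neg_mem hnN
  have hcl : ψ p ∈ closure (ψ '' C) := by
    have h1 : ((0 : M), e) ∈ closure (Set.univ ×ˢ (K : Set G)) := by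
      rw [closure_prod_eq]
      exact ⟨by simp, heK⟩
    have h2 : q ((0 : M), e) ∈ closure ((q : (M × G) → _) '' (Set.univ ×ˢ (K : Set G))) :=
      (image_closure_subset_closure_image hqcont) ⟨_, h1, rfl⟩
    exact closure_mono hq_eq h2
  -- conclude using that `ψ` is an embedding
  have hpC : p ∈ C := by
    have hcp := hind.closure_eq_preimage_closure_image C
    rw [hCclosed.closure_eq] at hcp
    rw [hcp]
    exact hcl
  have : (⟨e, heE⟩ : ↥E) = 0 := hpC.2
  exact hene (by simpa using congrArg (Subtype.val) this)
end

section
/- Every closed subgroup of a perfectly minimal abelian Hausdorff topological group is perfectly minimal. -/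
universe u

/-- A topological group `M` is *perfectly minimal* if `M × H` is minimal for every minimal
(Hausdorff) topological group `H`. -/
def IsPerfectlyMinimal (M : Type u) [AddGroup M] [TopologicalSpace M] : Prop :=
  ∀ (H : Type u) [AddGroup H] [TopologicalSpace H] [IsTopologicalAddGroup H] [T2Space H],
    IsMinimalAddGroup H → IsMinimalAddGroup (M × H)

open Filter Set Topology

section Helpers

private lemma half_nhds' {G : Type*} [AddGroup G] [TopologicalSpace G] [IsTopologicalAddGroup G]
    {U : Set G} (hU : U ∈ 𝓝 (0 : G)) : ∃ V ∈ 𝓝 (0 : G), ∀ a ∈ V, ∀ b ∈ V, a + b ∈ U := by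
  rcases exists_open_nhds_zero_add_subset hU with ⟨V, hVo, hV0, hVU⟩
  exact ⟨V, hVo.mem_nhds hV0, fun a ha b hb => hVU (Set.add_mem_add ha hb)⟩

private lemma neg_nhds' {G : Type*} [AddGroup G] [TopologicalSpace G] [IsTopologicalAddGroup G]
    {U : Set G} (hU : U ∈ 𝓝 (0 : G)) : (fun x : G => -x) ⁻¹' U ∈ 𝓝 (0 : G) := by
  have h : Filter.Tendsto (fun x : G => -x) (𝓝 0) (𝓝 0) := by
    simpa using continuous_neg.tendsto (0 : G)
  exact h hU

private lemma conj_nhds' {G : Type*} [AddGroup G] [TopologicalSpace G] [IsTopologicalAddGroup G]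
    (z : G) {U : Set G} (hU : U ∈ 𝓝 (0 : G)) : (fun v : G => z + v + -z) ⁻¹' U ∈ 𝓝 (0 : G) := by
  have h : Filter.Tendsto (fun v : G => z + v + -z) (𝓝 0) (𝓝 0) := by
    have hc : Continuous fun v : G => z + v + -z :=
      (continuous_const.add continuous_id).add continuous_const
    simpa using hc.tendsto 0
  exact h hU

private lemma sep_closed_nhds' {G : Type*} [AddGroup G] [TopologicalSpace G]
    [IsTopologicalAddGroup G] [T2Space G] {n : G} (hn : n ≠ 0) :
    ∃ V ∈ 𝓝 (0 : G), IsClosed V ∧ n ∉ V := by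
  have h0 : ({n}ᶜ : Set G) ∈ 𝓝 (0 : G) :=
    isOpen_compl_singleton.mem_nhds (by simpa using Ne.symm hn)
  rcases (closed_nhds_basis (0 : G)).mem_iff.1 h0 with ⟨V, ⟨hV, hVc⟩, hsub⟩
  exact ⟨V, hV, hVc, fun h => hsub h rfl⟩

/-- The basic sets of the auxiliary group topology on `M × K`. -/
private def SS {M K N : Type u} [AddCommGroup M] [AddGroup K]
    (j : N → M × K) (U : Set M) (V : Set N) : Set (M × K) :=
  {p | ∃ u ∈ U, ∃ v ∈ V, p = ((u, 0) : M × K) + j v}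

/-- The core argument: if `M × K` is a minimal topological group, `H` is a closed subgroup
of the abelian group `M`, and `N` is a Hausdorff topological group mapping isomorphically
onto `H × K ⊆ M × K` via `j`, with its topology coarser than the subspace topology, then
the topology of `N` equals the topology induced by `j`. -/
private theorem aux_core {M K N : Type u} [AddCommGroup M] [TopologicalSpace M]
    [IsTopologicalAddGroup M] [T2Space M] [AddGroup K] [TopologicalSpace K]
    [IsTopologicalAddGroup K] [T2Space K] [AddGroup N] [tN : TopologicalSpace N]
    [IsTopologicalAddGroup N] [T2Space N]
    (hMK : IsMinimalAddGroup (M × K)) (H : AddSubgroup M) (hH : IsClosed (H : Set M))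
    (j : N → M × K)
    (hj_add : ∀ v w : N, j (v + w) = j v + j w)
    (hj0 : j 0 = 0)
    (hj_inj : Function.Injective j)
    (hj_fst : ∀ v : N, (j v).1 ∈ H)
    (hj_surj : ∀ z : M × K, z.1 ∈ H → ∃ n : N, j n = z)
    (hsec0 : ∀ k : K, ∃ c : N, j c = ((0 : M), k))
    (hle : TopologicalSpace.induced j instTopologicalSpaceProd ≤ tN) :
    tN = TopologicalSpace.induced j instTopologicalSpaceProd := by
  classical
  have hj_neg : ∀ v : N, j (-v) = -(j v) := by
    intro v
    have := hj_add v (-v)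
    rw [add_neg_cancel, hj0] at this
    have h2 := congrArg (fun z => -(j v) + z) this.symm
    simpa [← add_assoc] using h2
  -- membership and monotonicity for the basic sets
  have hS_mem : ∀ {U : Set M} {V : Set N} (u : M) (v : N), u ∈ U → v ∈ V →
      (((u, 0) : M × K) + j v) ∈ SS j U V := fun u v hu hv => ⟨u, hu, v, hv, rfl⟩
  have hS_mono : ∀ {U U' : Set M} {V V' : Set N}, U ⊆ U' → V ⊆ V' →
      SS j U V ⊆ SS j U' V' := by
    rintro U U' V V' hU hV p ⟨u, hu, v, hv, rfl⟩
    exact ⟨u, hU hu, v, hV hv, rfl⟩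
  -- algebraic identities
  have key_add : ∀ (u₁ u₂ : M) (v₁ v₂ : N),
      (((u₁, 0) : M × K) + j v₁) + (((u₂, 0) : M × K) + j v₂)
        = ((u₁ + u₂, 0) : M × K) + j (v₁ + v₂) := by
    intro u₁ u₂ v₁ v₂
    rw [hj_add]
    obtain ⟨a₁, b₁⟩ := j v₁
    obtain ⟨a₂, b₂⟩ := j v₂
    simp only [Prod.mk_add_mk, Prod.mk.injEq]
    exact ⟨by abel, by simp⟩
  have key_neg : ∀ (u : M) (v : N),
      -(((u, 0) : M × K) + j v) = ((-u, 0) : M × K) + j (-v) := by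
    intro u v
    rw [hj_neg]
    obtain ⟨a, b⟩ := j v
    simp only [Prod.mk_add_mk, Prod.neg_mk, Prod.mk.injEq, neg_add_rev]
    exact ⟨by abel, by simp⟩
  have key_conj : ∀ (x₀ : M × K) (u : M) (v c : N), j c = ((0 : M), x₀.2) →
      x₀ + (((u, 0) : M × K) + j v) + -x₀ = ((u, 0) : M × K) + j (c + v + -c) := by
    intro x₀ u v c hc
    rw [hj_add, hj_add, hj_neg, hc]
    obtain ⟨m, k⟩ := x₀
    obtain ⟨a, b⟩ := j v
    simp only [Prod.mk_add_mk, Prod.neg_mk, Prod.mk.injEq, neg_zero]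
    exact ⟨by abel, by simp⟩
  -- the filter basis generating the auxiliary topology on `M × K`
  let B : AddGroupFilterBasis (M × K) :=
  { sets := {s | ∃ U ∈ 𝓝 (0 : M), ∃ V ∈ 𝓝 (0 : N), s = SS j U V}
    nonempty := ⟨SS j univ univ, univ, univ_mem, univ, univ_mem, rfl⟩
    inter_sets := by
      rintro s₁ s₂ ⟨U₁, hU₁, V₁, hV₁, rfl⟩ ⟨U₂, hU₂, V₂, hV₂, rfl⟩
      refine ⟨SS j (U₁ ∩ U₂) (V₁ ∩ V₂), ⟨U₁ ∩ U₂, inter_mem hU₁ hU₂, V₁ ∩ V₂,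
        inter_mem hV₁ hV₂, rfl⟩, subset_inter (hS_mono inter_subset_left inter_subset_left)
          (hS_mono inter_subset_right inter_subset_right)⟩
    zero' := by
      rintro s ⟨U, hU, V, hV, rfl⟩
      have h0 : ((0 : M × K)) = (((0 : M), (0 : K)) : M × K) + j 0 := by simp [hj0]; rfl
      exact h0 ▸ hS_mem 0 0 (mem_of_mem_nhds hU) (mem_of_mem_nhds hV)
    add' := by
      rintro s ⟨U, hU, V, hV, rfl⟩
      obtain ⟨U', hU', hU'add⟩ := half_nhds' hU
      obtain ⟨V', hV', hV'add⟩ := half_nhds' hV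
      refine ⟨SS j U' V', ⟨U', hU', V', hV', rfl⟩, ?_⟩
      rintro p ⟨p₁, ⟨u₁, hu₁, v₁, hv₁, rfl⟩, p₂, ⟨u₂, hu₂, v₂, hv₂, rfl⟩, rfl⟩
      show (((u₁, 0) : M × K) + j v₁) + (((u₂, 0) : M × K) + j v₂) ∈ SS j U V
      rw [key_add]
      exact hS_mem _ _ (hU'add _ hu₁ _ hu₂) (hV'add _ hv₁ _ hv₂)
    neg' := by
      rintro s ⟨U, hU, V, hV, rfl⟩
      refine ⟨SS j ((fun x : M => -x) ⁻¹' U) ((fun x : N => -x) ⁻¹' V),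
        ⟨_, neg_nhds' hU, _, neg_nhds' hV, rfl⟩, ?_⟩
      rintro p ⟨u, hu, v, hv, rfl⟩
      show -(((u, 0) : M × K) + j v) ∈ SS j U V
      rw [key_neg]
      exact hS_mem _ _ hu hv
    conj' := by
      rintro x₀ s ⟨U, hU, V, hV, rfl⟩
      obtain ⟨c, hc⟩ := hsec0 x₀.2
      refine ⟨SS j U ((fun v : N => c + v + -c) ⁻¹' V),
        ⟨U, hU, _, conj_nhds' c hV, rfl⟩, ?_⟩
      rintro p ⟨u, hu, v, hv, rfl⟩
      show x₀ + (((u, 0) : M × K) + j v) + -x₀ ∈ SS j U V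
      rw [key_conj x₀ u v c hc]
      exact hS_mem _ _ hu hv }
  have hBmem : ∀ {U : Set M} {V : Set N}, U ∈ 𝓝 (0 : M) → V ∈ 𝓝 (0 : N) →
      SS j U V ∈ B := fun hU hV => ⟨_, hU, _, hV, rfl⟩
  -- the continuous section of `j` over `K`
  obtain ⟨s, hs⟩ : ∃ s : K → N, ∀ k : K, j (s k) = ((0 : M), k) :=
    ⟨fun k => (hsec0 k).choose, fun k => (hsec0 k).choose_spec⟩
  have hs_cont : Continuous s := by
    have h1 : Continuous[_, TopologicalSpace.induced j instTopologicalSpaceProd] s := by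
      refine continuous_induced_rng.2 ?_
      have : (j ∘ s) = fun k : K => ((0 : M), k) := funext fun k => hs k
      rw [this]
      exact continuous_const.prodMk continuous_id
    rw [continuous_iff_le_induced] at h1 ⊢
    exact le_trans h1 (induced_mono hle)
  have hs0 : s 0 = 0 := hj_inj (by rw [hs, hj0]; rfl)
  -- each basic set is a neighborhood of 0 in the product topology
  have hSnhds : ∀ {U : Set M} {V : Set N}, U ∈ 𝓝 (0 : M) → V ∈ 𝓝 (0 : N) →
      SS j U V ∈ 𝓝 (0 : M × K) := by
    intro U V hU hV
    have hQ : s ⁻¹' V ∈ 𝓝 (0 : K) := by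
      have h : Filter.Tendsto s (𝓝 (0 : K)) (𝓝 (s 0)) := hs_cont.continuousAt
      rw [hs0] at h
      exact h hV
    refine mem_of_superset (prod_mem_nhds hU hQ) ?_
    rintro ⟨x, q⟩ ⟨hx, hq⟩
    have hxq : ((x, q) : M × K) = ((x, 0) : M × K) + j (s q) := by
      rw [hs]
      simp
    exact hxq ▸ hS_mem _ _ hx hq
  -- the auxiliary topology on M × K
  have hγgroup : @IsTopologicalAddGroup (M × K) B.topology _ := B.isTopologicalAddGroup
  have hγle : (instTopologicalSpaceProd : TopologicalSpace (M × K)) ≤ B.topology := by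
    refine (le_iff_nhds _ _).2 fun x p hp => ?_
    obtain ⟨V, hVB, hVs⟩ := (B.nhds_hasBasis x).mem_iff.1 hp
    obtain ⟨U, hU, V', hV', rfl⟩ := hVB
    refine mem_of_superset ?_ hVs
    rw [← map_add_left_nhds_zero x]
    exact image_mem_map (hSnhds hU hV')
  -- separation
  have hsep : ∀ z : M × K, z ≠ 0 → ∃ U ∈ 𝓝 (0 : M), ∃ V ∈ 𝓝 (0 : N),
      z ∉ SS j U V := by
    rintro ⟨z1, z2⟩ hz
    by_cases hz1 : z1 ∈ H
    · obtain ⟨n, hjn⟩ := hj_surj (z1, z2) hz1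
      have hn0 : n ≠ 0 := by
        intro h
        apply hz
        rw [← hjn, h, hj0]
      obtain ⟨V, hV, hVc, hnV⟩ := sep_closed_nhds' hn0
      have hmain : ∃ U ∈ 𝓝 (0 : M), ((z1, z2) : M × K) ∉ SS j U V := by
        by_contra hcon
        push_neg at hcon
        have hVclosed : IsClosed[TopologicalSpace.induced j instTopologicalSpaceProd] V :=
          hVc.mono hle
        have hPnhds : (Vᶜ : Set N) ∈
            @nhds N (TopologicalSpace.induced j instTopologicalSpaceProd) n :=
          @IsOpen.mem_nhds N (TopologicalSpace.induced j instTopologicalSpaceProd) n (Vᶜ)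
            hVclosed.isOpen_compl hnV
        rw [nhds_induced, mem_comap, hjn] at hPnhds
        obtain ⟨W, hW, hWP⟩ := hPnhds
        obtain ⟨A, hA, Bs, hBs, hAB⟩ := mem_nhds_prod_iff.1 hW
        have hU'' : (fun u : M => z1 - u) ⁻¹' A ∈ 𝓝 (0 : M) := by
          have hc2 : Filter.Tendsto (fun u : M => z1 - u) (𝓝 0) (𝓝 z1) := by
            have := (continuous_sub_left z1).tendsto (0 : M); rwa [sub_zero] at this
          exact hc2 hA
        obtain ⟨u, hu, v, hv, heq⟩ := hcon _ hU''
        have h1 : z1 = u + (j v).1 := by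
          have := congrArg Prod.fst heq
          simpa using this
        have h2 : z2 = (j v).2 := by
          have := congrArg Prod.snd heq
          simpa using this
        have hjvW : j v ∈ W := by
          apply hAB
          constructor
          · show (j v).1 ∈ A
            have hv1 : (j v).1 = z1 - u := by rw [h1]; abel
            rw [hv1]
            exact hu
          · show (j v).2 ∈ Bs
            rw [← h2]
            exact mem_of_mem_nhds hBs
        exact hWP hjvW hv
      obtain ⟨U, hU, hzU⟩ := hmain
      exact ⟨U, hU, V, hV, hzU⟩
    · refine ⟨(fun u : M => z1 - u) ⁻¹' ((H : Set M)ᶜ), ?_, univ, univ_mem, ?_⟩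
      · have hcont : Filter.Tendsto (fun u : M => z1 - u) (𝓝 0) (𝓝 z1) := by
          have := (continuous_sub_left z1).tendsto (0 : M); rwa [sub_zero] at this
        exact hcont (hH.isOpen_compl.mem_nhds hz1)
      · rintro ⟨u, hu, v, _, heq⟩
        have h1 : z1 = u + (j v).1 := by
          have := congrArg Prod.fst heq
          simpa using this
        have hmem : z1 - u ∈ (H : Set M)ᶜ := hu
        apply hmem
        have hv1 : z1 - u = (j v).1 := by rw [h1]; abel
        rw [hv1]
        exact hj_fst v
  -- the auxiliary topology is Hausdorff
  have hγT2 : @T2Space (M × K) B.topology := by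
    refine @IsTopologicalAddGroup.t2Space_of_zero_sep _ B.topology _ hγgroup fun z hz => ?_
    obtain ⟨U, hU, V, hV, hzUV⟩ := hsep z hz
    exact ⟨SS j U V, B.mem_nhds_zero (hBmem hU hV), hzUV⟩
  -- minimality forces the auxiliary topology to be the product topology
  have hγeq : B.topology = (instTopologicalSpaceProd : TopologicalSpace (M × K)) :=
    hMK B.topology hγle hγgroup hγT2
  -- conclude
  have hindgroup : @IsTopologicalAddGroup N (TopologicalSpace.induced j instTopologicalSpaceProd)
      _ := by
    let jhom : N →+ M × K := AddMonoidHom.mk' j hj_add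
    exact topologicalAddGroup_induced jhom
  refine IsTopologicalAddGroup.ext ‹_› hindgroup ?_
  apply le_antisymm
  · intro P hP
    rw [nhds_induced, mem_comap, hj0] at hP
    obtain ⟨W, hW, hWP⟩ := hP
    have hWγ : W ∈ @nhds _ B.topology (0 : M × K) := by rw [hγeq]; exact hW
    obtain ⟨sb, hsB, hsW⟩ := B.nhds_zero_hasBasis.mem_iff.1 hWγ
    obtain ⟨U, hU, V, hV, rfl⟩ := hsB
    refine mem_of_superset hV fun v hv => hWP ?_
    show j v ∈ W
    apply hsW
    have hv' : j v = ((0, 0) : M × K) + j v := by simp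
    exact hv' ▸ hS_mem 0 v (mem_of_mem_nhds hU) hv
  · exact nhds_mono hle

end Helpers

/-- **Remark 2.9.** Every closed subgroup of a perfectly minimal abelian Hausdorff topological
group is perfectly minimal. -/
theorem isPerfectlyMinimal_of_isClosed_addSubgroup {M : Type u} [AddCommGroup M]
    [TopologicalSpace M] [IsTopologicalAddGroup M] [T2Space M]
    (hM : IsPerfectlyMinimal M) (H : AddSubgroup M) (hH : IsClosed (H : Set M)) :
    IsPerfectlyMinimal ↥H := by
  intro K _ _ _ _ hK
  have hMK : IsMinimalAddGroup (M × K) := hM K hK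
  intro t ht htg ht2
  have hfind : @Topology.IsInducing (↥H × K) (M × K) instTopologicalSpaceProd
      instTopologicalSpaceProd (fun v : ↥H × K => (((v.1 : M), v.2) : M × K)) :=
    Topology.IsInducing.prodMap ⟨rfl⟩ Topology.IsInducing.id
  have heq : (instTopologicalSpaceProd : TopologicalSpace (↥H × K))
      = TopologicalSpace.induced (fun v : ↥H × K => (((v.1 : M), v.2) : M × K))
        instTopologicalSpaceProd :=
    @Topology.IsInducing.eq_induced (↥H × K) (M × K) instTopologicalSpaceProd
      instTopologicalSpaceProd _ hfind
  have hle : TopologicalSpace.induced (fun v : ↥H × K => (((v.1 : M), v.2) : M × K))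
      instTopologicalSpaceProd ≤ t := by
    rw [← heq]
    exact ht
  have hcore := @aux_core M K (↥H × K) _ _ _ _ _ _ _ _ _ t htg ht2 hMK H hH
    (fun v : ↥H × K => (((v.1 : M), v.2) : M × K))
    (by intro v w; simp)
    (by simp)
    (by rintro ⟨a, b⟩ ⟨c, d⟩ h
        simp only [Prod.mk.injEq] at h
        exact Prod.ext (Subtype.ext h.1) h.2)
    (fun v => (v.1).2)
    (by rintro ⟨z1, z2⟩ hz1; exact ⟨((⟨z1, hz1⟩ : ↥H), z2), rfl⟩)
    (fun k => ⟨((0 : ↥H), k), by simp⟩)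
    hle
  rw [hcore]
  exact heq.symm
end
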